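/- Let Λ be a lower finite poset and let 𝒜 be an abelian category equipped with a left stratification by Λ. Then for every simple object L of 𝒜 there exists a unique λ ∈ Λ such that L lies in 𝒜_{≤λ} and L does not lie in 𝒜_{<λ}, where 𝒜_{≤λ} := 𝒜_{Λ_{≤λ}} and 𝒜_{<λ} := 𝒜_{Λ_{<λ}}. -/

import Mathlib

open CategoryTheory Limits

universe w v u v' u'

/-- A Serre subcategory of an abelian category, given as a property of objects: it contains
the zero objects and is closed under subobjects, quotient objects, and extensions. -/
structure IsSerreSubcategory {𝒜 : Type*} [Category 𝒜] [Abelian 𝒜] (P : 𝒜 → Prop) : Prop where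
  prop_of_isZero : ∀ X : 𝒜, IsZero X → P X
  prop_of_mono : ∀ {X Y : 𝒜} (f : X ⟶ Y), Mono f → P Y → P X
  prop_of_epi : ∀ {X Y : 𝒜} (f : X ⟶ Y), Epi f → P X → P Y
  prop_of_extension : ∀ (S : ShortComplex 𝒜), S.ShortExact → P S.X₁ → P S.X₃ → P S.X₂

/-- A left stratification of an abelian category `𝒜` by a poset `Λ`.  It consists of a Serre
subcategory `𝒜_Ω` of `𝒜` (given by the property `P Ω` of objects) for every finite lower
subset `Ω ⊆ Λ` and an abelian strata category `strata l` for every `l ∈ Λ`, such that the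
collection is order preserving and exhaustive, `𝒜_∅ = 0`, and for every finite lower subset
`Ω` and every maximal element `l` of `Ω` there is an exact functor `j* : 𝒜_Ω ⥤ 𝒜_l`
admitting a fully faithful left adjoint `j_!`, whose kernel is exactly `𝒜_{Ω∖{l}}`; these
left recollements are compatible: `j_!` takes values in `𝒜_{≤l}` and the restriction of
`j*` to `𝒜_{≤l}` is naturally isomorphic to the structure functor of `Λ_{≤l}`. -/
structure LeftStratification (Λ : Type w) [PartialOrder Λ]
    (𝒜 : Type u) [Category.{v} 𝒜] [Abelian 𝒜] where
  /-- membership of an object in the subcategory `𝒜_Ω` -/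
  P : Set Λ → 𝒜 → Prop
  /-- the strata categories `𝒜_l` -/
  strata : Λ → Cat.{v', u'}
  strataAbelian : ∀ l : Λ, Abelian (strata l)
  mono : ∀ {Ω Ω' : Set Λ}, Ω ⊆ Ω' → ∀ {X : 𝒜}, P Ω X → P Ω' X
  serre : ∀ Ω : Set Λ, Ω.Finite → IsLowerSet Ω → IsSerreSubcategory (P Ω)
  empty_isZero : ∀ X : 𝒜, P ∅ X → IsZero X
  exhaustive : ∀ X : 𝒜, ∃ Ω : Set Λ, Ω.Finite ∧ IsLowerSet Ω ∧ P Ω X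
  /-- the functors `j* : 𝒜_Ω ⥤ 𝒜_l` (only relevant for `Ω` finite lower and `l ∈ Ω`
  maximal) -/
  jstar : ∀ (Ω : Set Λ) (l : Λ), ObjectProperty.FullSubcategory (P Ω) ⥤ strata l
  /-- the functors `j_! : 𝒜_l ⥤ 𝒜_Ω` (only relevant for `Ω` finite lower and `l ∈ Ω`
  maximal) -/
  jbang : ∀ (Ω : Set Λ) (l : Λ), strata l ⥤ ObjectProperty.FullSubcategory (P Ω)
  adj : ∀ (Ω : Set Λ), Ω.Finite → IsLowerSet Ω → ∀ l ∈ Ω, (∀ m ∈ Ω, l ≤ m → m = l) →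
    Nonempty (jbang Ω l ⊣ jstar Ω l)
  jbang_full : ∀ (Ω : Set Λ), Ω.Finite → IsLowerSet Ω → ∀ l ∈ Ω, (∀ m ∈ Ω, l ≤ m → m = l) →
    (jbang Ω l).Full
  jbang_faithful : ∀ (Ω : Set Λ), Ω.Finite → IsLowerSet Ω → ∀ l ∈ Ω,
    (∀ m ∈ Ω, l ≤ m → m = l) → (jbang Ω l).Faithful
  jstar_exact : ∀ (Ω : Set Λ), Ω.Finite → IsLowerSet Ω → ∀ l ∈ Ω, (∀ m ∈ Ω, l ≤ m → m = l) →
    Nonempty (PreservesFiniteLimits (jstar Ω l)) ∧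
      Nonempty (PreservesFiniteColimits (jstar Ω l))
  jstar_kernel : ∀ (Ω : Set Λ), Ω.Finite → IsLowerSet Ω → ∀ l ∈ Ω, (∀ m ∈ Ω, l ≤ m → m = l) →
    ∀ X : ObjectProperty.FullSubcategory (P Ω), (IsZero ((jstar Ω l).obj X) ↔ P (Ω \ {l}) X.obj)
  jbang_mem : ∀ (Ω : Set Λ), Ω.Finite → IsLowerSet Ω → ∀ l ∈ Ω, (∀ m ∈ Ω, l ≤ m → m = l) →
    ∀ Z : strata l, P {m : Λ | m ≤ l} ((jbang Ω l).obj Z).obj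
  compat : ∀ (Ω : Set Λ) (hfin : Ω.Finite) (hlow : IsLowerSet Ω) (l : Λ) (hl : l ∈ Ω)
      (hmax : ∀ m ∈ Ω, l ≤ m → m = l),
    Nonempty ((ObjectProperty.ιOfLE (fun X hX => mono (fun m hm => hlow hm hl) hX) ⋙
      jstar Ω l) ≅ jstar {m : Λ | m ≤ l} l)

/-- **Simple objects in a left stratified category have a unique stratum.**
Let `Λ` be a lower finite poset and `𝒜` an abelian category equipped with a left
stratification by `Λ`.  Then for every simple object `L` of `𝒜` there is a unique
`l ∈ Λ` such that `L` lies in `𝒜_{≤l}` but not in `𝒜_{<l}`. -/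
theorem LeftStratification.exists_unique_stratum_of_simple
    {Λ : Type w} [PartialOrder Λ] (hΛ : ∀ l : Λ, Set.Finite {m : Λ | m ≤ l})
    {𝒜 : Type u} [Category.{v} 𝒜] [Abelian 𝒜]
    (S : LeftStratification.{w, v, u, v', u'} Λ 𝒜)
    (L : 𝒜) (hL : Simple L) :
    ∃! l : Λ, S.P {m : Λ | m ≤ l} L ∧ ¬ S.P {m : Λ | m < l} L := by

  classical
  -- abbreviations
  have hfin_le : ∀ l : Λ, Set.Finite {m : Λ | m ≤ l} := hΛ
  have hlow_le : ∀ l : Λ, IsLowerSet {m : Λ | m ≤ l} := fun l m m' hm' hm => le_trans hm' hm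
  have hfin_lt : ∀ l : Λ, Set.Finite {m : Λ | m < l} :=
    fun l => (hΛ l).subset (fun m hm => le_of_lt hm)
  have hlow_lt : ∀ l : Λ, IsLowerSet {m : Λ | m < l} :=
    fun l m m' hm' hm => lt_of_le_of_lt hm' hm
  have hmem_le : ∀ l : Λ, l ∈ {m : Λ | m ≤ l} := fun l => le_refl l
  have hmax_le : ∀ l : Λ, ∀ m ∈ {m : Λ | m ≤ l}, l ≤ m → m = l :=
    fun l m hm hlm => le_antisymm hm hlm
  have hdiff : ∀ l : Λ, {m : Λ | m ≤ l} \ {l} = {m : Λ | m < l} := by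
    intro l
    ext m
    simp only [Set.mem_diff, Set.mem_setOf_eq, Set.mem_singleton_iff]
    constructor
    · rintro ⟨h1, h2⟩; exact lt_of_le_of_ne h1 h2
    · intro h; exact ⟨le_of_lt h, ne_of_lt h⟩
  -- the counit is nonzero on objects with nonzero jstar
  have counit_ne : ∀ (Ω : Set Λ) (hf : Ω.Finite) (hl : IsLowerSet Ω) (l : Λ) (hm : l ∈ Ω)
      (hmax : ∀ m ∈ Ω, l ≤ m → m = l) (A : S.jbang Ω l ⊣ S.jstar Ω l)
      (X : ObjectProperty.FullSubcategory (S.P Ω)), ¬ IsZero ((S.jstar Ω l).obj X) →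
      ((A.counit.app X).hom : ((S.jbang Ω l).obj ((S.jstar Ω l).obj X)).obj ⟶ X.obj) ≠ 0 := by
    intro Ω hf hl l hm hmax A X hz h0
    haveI := S.strataAbelian l
    apply hz
    rw [Limits.IsZero.iff_id_eq_zero]
    apply (A.homEquiv ((S.jstar Ω l).obj X) X).symm.injective
    rw [Adjunction.homEquiv_counit, Adjunction.homEquiv_counit]
    ext
    simp only [ObjectProperty.FullSubcategory.comp_hom, h0, comp_zero]
  -- key lemma via compatibility
  have keyB : ∀ (Ω : Set Λ) (hf : Ω.Finite) (hl : IsLowerSet Ω) (l : Λ) (hm : l ∈ Ω)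
      (hmax : ∀ m ∈ Ω, l ≤ m → m = l) (X : 𝒜) (hX : S.P {m : Λ | m ≤ l} X),
      (S.P (Ω \ {l}) X ↔ S.P {m : Λ | m < l} X) := by
    intro Ω hf hl l hm hmax X hX
    obtain ⟨e⟩ := S.compat Ω hf hl l hm hmax
    haveI := S.strataAbelian l
    set X' : ObjectProperty.FullSubcategory (S.P {m : Λ | m ≤ l}) := ⟨X, hX⟩
    have h1 := S.jstar_kernel Ω hf hl l hm hmax
      ((ObjectProperty.ιOfLE (fun Y hY => S.mono (fun m hm' => hl hm' hm) hY)).obj X')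
    have h2 := S.jstar_kernel {m : Λ | m ≤ l} (hfin_le l) (hlow_le l) l (hmem_le l)
      (hmax_le l) X'
    rw [hdiff l] at h2
    have h3 := (e.app X').isZero_iff
    constructor
    · intro h
      exact h2.mp (h3.mp (h1.mpr h))
    · intro h
      exact h1.mp (h3.mpr (h2.mpr h))
  -- existence by induction on the size of a finite lower set containing L
  have exist : ∀ n : ℕ, ∀ Ω : Set Λ, Ω.Finite → IsLowerSet Ω → Ω.ncard ≤ n → S.P Ω L →
      ∃ l : Λ, S.P {m : Λ | m ≤ l} L ∧ ¬ S.P {m : Λ | m < l} L := by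
    intro n
    induction n with
    | zero =>
      intro Ω hf hl hcard hP
      have : Ω = ∅ := by
        rwa [Nat.le_zero, Set.ncard_eq_zero hf] at hcard
      subst this
      exact absurd (S.empty_isZero L hP) (Simple.not_isZero L)
    | succ n ih =>
      intro Ω hf hl hcard hP
      rcases Set.eq_empty_or_nonempty Ω with rfl | hne
      · exact absurd (S.empty_isZero L hP) (Simple.not_isZero L)
      obtain ⟨l, hlΩ, hlmax''⟩ := hf.exists_maximal hne
      have hlmax' : ∀ m ∈ Ω, l ≤ m → l = m := fun m hm hlm => le_antisymm hlm (hlmax'' hm hlm)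
      have hlmax : ∀ m ∈ Ω, l ≤ m → m = l := fun m hm hlm => (hlmax' m hm hlm).symm
      have hdcard : (Ω \ {l}).ncard ≤ n := by
        have := Set.ncard_diff_singleton_lt_of_mem hlΩ hf
        omega
      have hdlow : IsLowerSet (Ω \ {l}) := by
        intro a b hba ⟨haΩ, hal⟩
        refine ⟨hl hba haΩ, ?_⟩
        intro hb
        subst hb
        exact hal (hlmax a haΩ hba)
      haveI := S.strataAbelian l
      by_cases hz : IsZero ((S.jstar Ω l).obj ⟨L, hP⟩)
      · exact ih (Ω \ {l}) hf.diff hdlow hdcard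
          ((S.jstar_kernel Ω hf hl l hlΩ hlmax ⟨L, hP⟩).mp hz)
      · obtain ⟨A⟩ := S.adj Ω hf hl l hlΩ hlmax
        have hne0 := counit_ne Ω hf hl l hlΩ hlmax A ⟨L, hP⟩ hz
        set f : (((S.jbang Ω l).obj ((S.jstar Ω l).obj ⟨L, hP⟩)).obj : 𝒜) ⟶ L :=
          (A.counit.app ⟨L, hP⟩).hom with hfdef
        haveI : Epi f := epi_of_nonzero_to_simple hne0
        have hYmem := S.jbang_mem Ω hf hl l hlΩ hlmax ((S.jstar Ω l).obj ⟨L, hP⟩)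
        have hLle : S.P {m : Λ | m ≤ l} L :=
          (S.serre _ (hfin_le l) (hlow_le l)).prop_of_epi f this hYmem
        by_cases hlt : S.P {m : Λ | m < l} L
        · refine ih {m : Λ | m < l} (hfin_lt l) (hlow_lt l) ?_ hlt
          have hsub : {m : Λ | m < l} ⊆ Ω \ {l} := by
            intro m hm
            exact ⟨hl (le_of_lt hm) hlΩ, fun h => absurd (h ▸ hm) (lt_irrefl l)⟩
          calc {m : Λ | m < l}.ncard ≤ (Ω \ {l}).ncard :=
                Set.ncard_le_ncard hsub hf.diff
            _ ≤ n := hdcard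
        · exact ⟨l, hLle, hlt⟩
  obtain ⟨Ω, hf, hl, hP⟩ := S.exhaustive L
  obtain ⟨l, hLle, hLlt⟩ := exist Ω.ncard Ω hf hl le_rfl hP
  refine ⟨l, ⟨hLle, hLlt⟩, ?_⟩
  -- uniqueness
  have le_of : ∀ l₁ l₂ : Λ, S.P {m : Λ | m ≤ l₁} L → S.P {m : Λ | m ≤ l₂} L →
      ¬ S.P {m : Λ | m < l₂} L → l₂ ≤ l₁ := by
    intro l₁ l₂ h1 h2 h2'
    by_contra hn
    set Ω' : Set Λ := {m : Λ | m ≤ l₁} ∪ {m : Λ | m ≤ l₂} with hΩ'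
    have hf' : Ω'.Finite := (hfin_le l₁).union (hfin_le l₂)
    have hl' : IsLowerSet Ω' := (hlow_le l₁).union (hlow_le l₂)
    have hl₂ : l₂ ∈ Ω' := Or.inr (le_refl l₂)
    have hmax' : ∀ m ∈ Ω', l₂ ≤ m → m = l₂ := by
      rintro m (hm | hm) hlm
      · exact absurd (le_trans hlm hm) hn
      · exact le_antisymm hm hlm
    have hPΩ' : S.P Ω' L := S.mono (Set.subset_union_left) h1
    apply h2'
    rw [← keyB Ω' hf' hl' l₂ hl₂ hmax' L h2]
    refine S.mono ?_ h1
    intro m hm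
    refine ⟨Or.inl hm, ?_⟩
    intro hml
    exact hn (hml ▸ hm)
  intro l' ⟨h1', h2'⟩
  exact le_antisymm (le_of l l' hLle h1' h2') (le_of l' l h1' hLle hLlt)
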